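/- For every coloring c of the infinite Hex board, at most one player fulfills the standard winning condition: it is not the case that both Red and Blue fulfill the standard winning condition in c. -/

import Mathlib

/-- Hex adjacency on the infinite board `ℤ × ℤ`: `p` and `q` are adjacent iff
`q - p ∈ {(1,0), (-1,0), (0,1), (0,-1), (1,1), (-1,-1)}`. -/
def HexAdj (p q : ℤ × ℤ) : Prop :=
  q - p ∈ ({(1, 0), (-1, 0), (0, 1), (0, -1), (1, 1), (-1, -1)} : Set (ℤ × ℤ))

/-- A red `ℤ`-chain of the coloring `c`. -/
def IsRedChain (c : ℤ × ℤ → Option Bool) (f : ℤ → ℤ × ℤ) : Prop :=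
  ∀ n : ℤ, HexAdj (f n) (f (n + 1)) ∧ c (f n) = some true

/-- A blue `ℤ`-chain of the coloring `c`. -/
def IsBlueChain (c : ℤ × ℤ → Option Bool) (f : ℤ → ℤ × ℤ) : Prop :=
  ∀ n : ℤ, HexAdj (f n) (f (n + 1)) ∧ c (f n) = some false

/-- The convergence requirement for a winning red chain: for every `(a,b)` the positive
end eventually has both coordinates `> a`, `> b`, and the negative end `< a`, `< b`. -/
def RedConverges (f : ℤ → ℤ × ℤ) : Prop :=
  ∀ a b : ℤ, ∃ N : ℕ, ∀ n : ℕ, N ≤ n →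
    a < (f n).1 ∧ b < (f n).2 ∧ (f (-(n : ℤ))).1 < a ∧ (f (-(n : ℤ))).2 < b

/-- The convergence requirement for a winning blue chain. -/
def BlueConverges (f : ℤ → ℤ × ℤ) : Prop :=
  ∀ a b : ℤ, ∃ N : ℕ, ∀ n : ℕ, N ≤ n →
    (f n).1 < a ∧ b < (f n).2 ∧ a < (f (-(n : ℤ))).1 ∧ (f (-(n : ℤ))).2 < b

/-- Red fulfills the standard winning condition in the coloring `c`. -/
def RedWinsStd (c : ℤ × ℤ → Option Bool) : Prop :=
  ∃ f : ℤ → ℤ × ℤ, IsRedChain c f ∧ RedConverges f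

/-- Blue fulfills the standard winning condition in the coloring `c`. -/
def BlueWinsStd (c : ℤ × ℤ → Option Bool) : Prop :=
  ∃ f : ℤ → ℤ × ℤ, IsBlueChain c f ∧ BlueConverges f

/-! ### Auxiliary machinery: a parity (crossing-number) argument.

For a red cell `p` and the blue chain `g`, we count (mod 2) the number of blue edges
crossing the horizontal level `p.2 - 1/2` strictly to the left of `p`.  This parity is
invariant along the red chain, but equals `0` far to the south-west and `1` far to the
north-east, a contradiction. -/

/-- Arithmetic form of hex adjacency. -/
def AdjA (xn yn xm ym : ℤ) : Prop :=
    (xm = xn + 1 ∧ ym = yn) ∨ (xm = xn - 1 ∧ ym = yn) ∨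
    (xm = xn ∧ ym = yn + 1) ∨ (xm = xn ∧ ym = yn - 1) ∨
    (xm = xn + 1 ∧ ym = yn + 1) ∨ (xm = xn - 1 ∧ ym = yn - 1)

lemma hexAdj_iff (p q : ℤ × ℤ) : HexAdj p q ↔ AdjA p.1 p.2 q.1 q.2 := by
  simp only [HexAdj, Set.mem_insert_iff, Set.mem_singleton_iff, Prod.ext_iff,
    Prod.fst_sub, Prod.snd_sub, AdjA]
  omega

/-- Blue edge `m` (from `g m` to `g (m+1)`) crosses the horizontal level `p.2 - 1/2`
strictly to the left of `p`. -/
def CrossE (g : ℤ → ℤ × ℤ) (p : ℤ × ℤ) (m : ℤ) : Prop :=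
  (((g m).2 = p.2 - 1 ∧ (g (m+1)).2 = p.2) ∨ ((g m).2 = p.2 ∧ (g (m+1)).2 = p.2 - 1))
  ∧ (g m).1 + (g (m+1)).1 < 2 * p.1

instance (g : ℤ → ℤ × ℤ) (p : ℤ × ℤ) (m : ℤ) : Decidable (CrossE g p m) := by
  unfold CrossE; infer_instance

noncomputable def epar (g : ℤ → ℤ × ℤ) (p : ℤ × ℤ) (m : ℤ) : ZMod 2 :=
  if CrossE g p m then 1 else 0

/-- The crossing parity of `p` with respect to the chain `g`. -/
noncomputable def chi (g : ℤ → ℤ × ℤ) (p : ℤ × ℤ) : ZMod 2 := ∑ᶠ m, epar g p m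

set_option maxHeartbeats 2000000 in
lemma key10 (px py qx qy xn yn xm ym : ℤ)
    (h1 : qx = px + 1) (h2 : qy = py)
    (hadj : AdjA xn yn xm ym)
    (hpn : ¬(xn = px ∧ yn = py)) (hpm : ¬(xm = px ∧ ym = py))
    (hqn : ¬(xn = qx ∧ yn = qy)) (hqm : ¬(xm = qx ∧ ym = qy)) :
    (if ((yn = py - 1 ∧ ym = py) ∨ (yn = py ∧ ym = py - 1)) ∧ xn + xm < 2 * px
      then (1 : ZMod 2) else 0)
    = (if ((yn = qy - 1 ∧ ym = qy) ∨ (yn = qy ∧ ym = qy - 1)) ∧ xn + xm < 2 * qx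
      then (1 : ZMod 2) else 0) := by
  unfold AdjA at hadj
  split_ifs <;> first | rfl | (exfalso; omega)

set_option maxHeartbeats 2000000 in
lemma key01 (px py qx qy xn yn xm ym : ℤ)
    (h1 : qx = px) (h2 : qy = py + 1)
    (hadj : AdjA xn yn xm ym)
    (hpn : ¬(xn = px ∧ yn = py)) (hpm : ¬(xm = px ∧ ym = py))
    (hqn : ¬(xn = qx ∧ yn = qy)) (hqm : ¬(xm = qx ∧ ym = qy)) :
    (if ((yn = py - 1 ∧ ym = py) ∨ (yn = py ∧ ym = py - 1)) ∧ xn + xm < 2 * px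
      then (1 : ZMod 2) else 0)
    + (if ((yn = qy - 1 ∧ ym = qy) ∨ (yn = qy ∧ ym = qy - 1)) ∧ xn + xm < 2 * qx
      then (1 : ZMod 2) else 0)
    = (if ym = py ∧ xm < px then (1 : ZMod 2) else 0)
      - (if yn = py ∧ xn < px then (1 : ZMod 2) else 0) := by
  unfold AdjA at hadj
  split_ifs <;> first | decide | (exfalso; omega)

set_option maxHeartbeats 2000000 in
lemma key11 (px py qx qy xn yn xm ym : ℤ)
    (h1 : qx = px + 1) (h2 : qy = py + 1)
    (hadj : AdjA xn yn xm ym)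
    (hpn : ¬(xn = px ∧ yn = py)) (hpm : ¬(xm = px ∧ ym = py))
    (hqn : ¬(xn = qx ∧ yn = qy)) (hqm : ¬(xm = qx ∧ ym = qy)) :
    (if ((yn = py - 1 ∧ ym = py) ∨ (yn = py ∧ ym = py - 1)) ∧ xn + xm < 2 * px
      then (1 : ZMod 2) else 0)
    + (if ((yn = qy - 1 ∧ ym = qy) ∨ (yn = qy ∧ ym = qy - 1)) ∧ xn + xm < 2 * qx
      then (1 : ZMod 2) else 0)
    = (if ym = py ∧ xm ≤ px then (1 : ZMod 2) else 0)
      - (if yn = py ∧ xn ≤ px then (1 : ZMod 2) else 0) := by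
  unfold AdjA at hadj
  split_ifs <;> first | decide | (exfalso; omega)

set_option maxHeartbeats 2000000 in
lemma keyTop (px py Y xn yn xm ym : ℤ)
    (hadj : AdjA xn yn xm ym)
    (hY : Y + 1 ≤ py) (hpx : 0 < px)
    (hbn : Y ≤ yn → xn < 0) (hbm : Y ≤ ym → xm < 0) :
    (if ((yn = py - 1 ∧ ym = py) ∨ (yn = py ∧ ym = py - 1)) ∧ xn + xm < 2 * px
      then (1 : ZMod 2) else 0)
    = (if py ≤ ym then (1 : ZMod 2) else 0) - (if py ≤ yn then (1 : ZMod 2) else 0) := by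
  unfold AdjA at hadj
  split_ifs <;> first | decide | (exfalso; omega)

lemma levelBound (g : ℤ → ℤ × ℤ) (hg : BlueConverges g) (py : ℤ) :
    ∃ K : ℕ, (∀ m : ℤ, (K : ℤ) ≤ m → py < (g m).2) ∧
      (∀ m : ℤ, m ≤ -(K : ℤ) → (g m).2 < py - 1) := by
  obtain ⟨N₁, h₁⟩ := hg 0 py
  obtain ⟨N₂, h₂⟩ := hg 0 (py - 1)
  refine ⟨max N₁ N₂, ?_, ?_⟩
  · intro m hm
    have hme : m = ((m.toNat : ℕ) : ℤ) := by omega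
    rw [hme]
    exact (h₁ m.toNat (by omega)).2.1
  · intro m hm
    have hme : m = -(((-m).toNat : ℕ) : ℤ) := by omega
    rw [hme]
    exact (h₂ (-m).toNat (by omega)).2.2.2

lemma epar_support (g : ℤ → ℤ × ℤ) (p : ℤ × ℤ) (K : ℕ)
    (hKa : ∀ m : ℤ, (K : ℤ) ≤ m → p.2 < (g m).2)
    (hKb : ∀ m : ℤ, m ≤ -(K : ℤ) → (g m).2 < p.2 - 1) :
    ∀ m : ℤ, m ∉ Finset.Ico (-(K : ℤ)) (K : ℤ) → epar g p m = 0 := by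
  intro m hm
  simp only [Finset.mem_Ico, not_and_or, not_le, not_lt] at hm
  have hy : p.2 < (g m).2 ∨ (g m).2 < p.2 - 1 := by
    rcases hm with hm | hm
    · exact Or.inr (hKb m (by omega))
    · exact Or.inl (hKa m hm)
  unfold epar
  rw [if_neg]
  rintro ⟨hys, -⟩
  rcases hys with ⟨h, -⟩ | ⟨h, -⟩ <;> omega

lemma chi_window (g : ℤ → ℤ × ℤ) (p : ℤ × ℤ) (K : ℕ)
    (hKa : ∀ m : ℤ, (K : ℤ) ≤ m → p.2 < (g m).2)
    (hKb : ∀ m : ℤ, m ≤ -(K : ℤ) → (g m).2 < p.2 - 1) :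
    chi g p = ∑ m ∈ Finset.Ico (-(K : ℤ)) (K : ℤ), epar g p m := by
  apply finsum_eq_sum_of_support_subset
  intro m hm
  simp only [Finset.coe_Ico, Set.mem_Ico]
  by_contra hc
  exact hm (epar_support g p K hKa hKb m (by simpa [Finset.mem_Ico] using hc))

lemma tele (v : ℤ → ZMod 2) (K : ℕ) :
    ∑ m ∈ Finset.Ico (-(K:ℤ)) (K:ℤ), (v (m+1) - v m) = v (K:ℤ) - v (-(K:ℤ)) := by
  induction K with
  | zero => simp
  | succ k ih =>
    have hset : Finset.Ico (-((k+1:ℕ):ℤ)) ((k+1:ℕ):ℤ)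
        = insert (-(k:ℤ)-1) (insert (k:ℤ) (Finset.Ico (-(k:ℤ)) (k:ℤ))) := by
      ext x; simp only [Finset.mem_Ico, Finset.mem_insert]; push_cast; omega
    rw [hset, Finset.sum_insert (by simp only [Finset.mem_insert, Finset.mem_Ico]; omega),
      Finset.sum_insert (by simp only [Finset.mem_Ico]; omega), ih]
    have e1 : (-(k:ℤ)-1)+1 = -(k:ℤ) := by ring
    have e2 : (-((k+1:ℕ):ℤ)) = -(k:ℤ)-1 := by push_cast; ring
    have e3 : (((k+1:ℕ)):ℤ) = (k:ℤ)+1 := by push_cast; ring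
    rw [e1, e2, e3]
    abel

lemma chi_step01 (g : ℤ → ℤ × ℤ) (hgb : BlueConverges g)
    (hgadj : ∀ m : ℤ, AdjA (g m).1 (g m).2 (g (m+1)).1 (g (m+1)).2)
    (p q : ℤ × ℤ) (hp : ∀ m, ¬((g m).1 = p.1 ∧ (g m).2 = p.2))
    (hq : ∀ m, ¬((g m).1 = q.1 ∧ (g m).2 = q.2))
    (h1 : q.1 = p.1) (h2 : q.2 = p.2 + 1) :
    chi g p = chi g q := by
  obtain ⟨K₁, hK₁a, hK₁b⟩ := levelBound g hgb p.2
  obtain ⟨K₂, hK₂a, hK₂b⟩ := levelBound g hgb q.2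
  set K : ℕ := max K₁ K₂ with hK
  have hKa : ∀ m : ℤ, (K : ℤ) ≤ m → p.2 < (g m).2 := fun m hm => hK₁a m (by omega)
  have hKb : ∀ m : ℤ, m ≤ -(K : ℤ) → (g m).2 < p.2 - 1 := fun m hm => hK₁b m (by omega)
  have hKa' : ∀ m : ℤ, (K : ℤ) ≤ m → q.2 < (g m).2 := fun m hm => hK₂a m (by omega)
  have hKb' : ∀ m : ℤ, m ≤ -(K : ℤ) → (g m).2 < q.2 - 1 := fun m hm => hK₂b m (by omega)
  have hwp := chi_window g p K hKa hKb
  have hwq := chi_window g q K hKa' hKb'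
  set v : ℤ → ZMod 2 := fun m => if (g m).2 = p.2 ∧ (g m).1 < p.1 then 1 else 0 with hv
  have hpt : ∀ m : ℤ, epar g p m + epar g q m = v (m+1) - v m := by
    intro m
    have := key01 p.1 p.2 q.1 q.2 (g m).1 (g m).2 (g (m+1)).1 (g (m+1)).2 h1 h2
      (hgadj m) (hp m) (hp (m+1)) (hq m) (hq (m+1))
    simpa [epar, CrossE, hv] using this
  have hsum : chi g p + chi g q = v (K : ℤ) - v (-(K : ℤ)) := by
    rw [hwp, hwq, ← Finset.sum_add_distrib, ← tele v K]
    exact Finset.sum_congr rfl fun m _ => hpt m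
  have hvK : v (K : ℤ) = 0 := by
    have := hKa (K : ℤ) le_rfl
    simp only [hv]; rw [if_neg]; omega
  have hvK' : v (-(K : ℤ)) = 0 := by
    have := hKb (-(K : ℤ)) le_rfl
    simp only [hv]; rw [if_neg]; omega
  rw [hvK, hvK'] at hsum
  have hz : ∀ a b : ZMod 2, a + b = 0 - 0 → a = b := by decide
  exact hz _ _ hsum

lemma chi_step11 (g : ℤ → ℤ × ℤ) (hgb : BlueConverges g)
    (hgadj : ∀ m : ℤ, AdjA (g m).1 (g m).2 (g (m+1)).1 (g (m+1)).2)
    (p q : ℤ × ℤ) (hp : ∀ m, ¬((g m).1 = p.1 ∧ (g m).2 = p.2))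
    (hq : ∀ m, ¬((g m).1 = q.1 ∧ (g m).2 = q.2))
    (h1 : q.1 = p.1 + 1) (h2 : q.2 = p.2 + 1) :
    chi g p = chi g q := by
  obtain ⟨K₁, hK₁a, hK₁b⟩ := levelBound g hgb p.2
  obtain ⟨K₂, hK₂a, hK₂b⟩ := levelBound g hgb q.2
  set K : ℕ := max K₁ K₂ with hK
  have hKa : ∀ m : ℤ, (K : ℤ) ≤ m → p.2 < (g m).2 := fun m hm => hK₁a m (by omega)
  have hKb : ∀ m : ℤ, m ≤ -(K : ℤ) → (g m).2 < p.2 - 1 := fun m hm => hK₁b m (by omega)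
  have hKa' : ∀ m : ℤ, (K : ℤ) ≤ m → q.2 < (g m).2 := fun m hm => hK₂a m (by omega)
  have hKb' : ∀ m : ℤ, m ≤ -(K : ℤ) → (g m).2 < q.2 - 1 := fun m hm => hK₂b m (by omega)
  have hwp := chi_window g p K hKa hKb
  have hwq := chi_window g q K hKa' hKb'
  set v : ℤ → ZMod 2 := fun m => if (g m).2 = p.2 ∧ (g m).1 ≤ p.1 then 1 else 0 with hv
  have hpt : ∀ m : ℤ, epar g p m + epar g q m = v (m+1) - v m := by
    intro m
    have := key11 p.1 p.2 q.1 q.2 (g m).1 (g m).2 (g (m+1)).1 (g (m+1)).2 h1 h2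
      (hgadj m) (hp m) (hp (m+1)) (hq m) (hq (m+1))
    simpa [epar, CrossE, hv] using this
  have hsum : chi g p + chi g q = v (K : ℤ) - v (-(K : ℤ)) := by
    rw [hwp, hwq, ← Finset.sum_add_distrib, ← tele v K]
    exact Finset.sum_congr rfl fun m _ => hpt m
  have hvK : v (K : ℤ) = 0 := by
    have := hKa (K : ℤ) le_rfl
    simp only [hv]; rw [if_neg]; omega
  have hvK' : v (-(K : ℤ)) = 0 := by
    have := hKb (-(K : ℤ)) le_rfl
    simp only [hv]; rw [if_neg]; omega
  rw [hvK, hvK'] at hsum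
  have hz : ∀ a b : ZMod 2, a + b = 0 - 0 → a = b := by decide
  exact hz _ _ hsum

lemma chi_step10 (g : ℤ → ℤ × ℤ)
    (hgadj : ∀ m : ℤ, AdjA (g m).1 (g m).2 (g (m+1)).1 (g (m+1)).2)
    (p q : ℤ × ℤ) (hp : ∀ m, ¬((g m).1 = p.1 ∧ (g m).2 = p.2))
    (hq : ∀ m, ¬((g m).1 = q.1 ∧ (g m).2 = q.2))
    (h1 : q.1 = p.1 + 1) (h2 : q.2 = p.2) :
    chi g p = chi g q := by
  apply finsum_congr
  intro m
  have := key10 p.1 p.2 q.1 q.2 (g m).1 (g m).2 (g (m+1)).1 (g (m+1)).2 h1 h2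
    (hgadj m) (hp m) (hp (m+1)) (hq m) (hq (m+1))
  simpa [epar, CrossE] using this

/-- The crossing parity is invariant across a hex-adjacency step, provided neither cell
is on the blue chain. -/
lemma chi_adj (g : ℤ → ℤ × ℤ) (hgb : BlueConverges g)
    (hgadj : ∀ m : ℤ, AdjA (g m).1 (g m).2 (g (m+1)).1 (g (m+1)).2)
    (p q : ℤ × ℤ) (hp : ∀ m, ¬((g m).1 = p.1 ∧ (g m).2 = p.2))
    (hq : ∀ m, ¬((g m).1 = q.1 ∧ (g m).2 = q.2))
    (hadj : AdjA p.1 p.2 q.1 q.2) :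
    chi g p = chi g q := by
  rcases hadj with ⟨h1, h2⟩ | ⟨h1, h2⟩ | ⟨h1, h2⟩ | ⟨h1, h2⟩ | ⟨h1, h2⟩ | ⟨h1, h2⟩
  · exact chi_step10 g hgadj p q hp hq h1 h2
  · exact (chi_step10 g hgadj q p hq hp (by omega) (by omega)).symm
  · exact chi_step01 g hgb hgadj p q hp hq h1 h2
  · exact (chi_step01 g hgb hgadj q p hq hp (by omega) (by omega)).symm
  · exact chi_step11 g hgb hgadj p q hp hq h1 h2
  · exact (chi_step11 g hgb hgadj q p hq hp (by omega) (by omega)).symm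

/-- Far to the south-west, the crossing parity is `0`. -/
lemma chi_bot (g : ℤ → ℤ × ℤ) (p : ℤ × ℤ) (Y : ℤ)
    (hb : ∀ m : ℤ, (g m).2 ≤ Y → 0 < (g m).1)
    (hp1 : p.1 < 0) (hp2 : p.2 ≤ Y) :
    chi g p = 0 := by
  have h : ∀ m : ℤ, epar g p m = 0 := by
    intro m
    unfold epar
    rw [if_neg]
    rintro ⟨hys, hx⟩
    have hy1 : (g m).2 ≤ Y := by rcases hys with ⟨a, _⟩ | ⟨a, _⟩ <;> omega
    have hy2 : (g (m+1)).2 ≤ Y := by rcases hys with ⟨_, a⟩ | ⟨_, a⟩ <;> omega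
    have := hb m hy1
    have := hb (m+1) hy2
    omega
  unfold chi
  rw [finsum_congr h]
  exact finsum_zero

/-- Far to the north-east, the crossing parity is `1`. -/
lemma chi_top (g : ℤ → ℤ × ℤ) (hgb : BlueConverges g)
    (hgadj : ∀ m : ℤ, AdjA (g m).1 (g m).2 (g (m+1)).1 (g (m+1)).2)
    (p : ℤ × ℤ) (Y : ℤ)
    (hb : ∀ m : ℤ, Y ≤ (g m).2 → (g m).1 < 0)
    (hp1 : 0 < p.1) (hp2 : Y + 1 ≤ p.2) :
    chi g p = 1 := by
  obtain ⟨K, hKa, hKb⟩ := levelBound g hgb p.2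
  have hw := chi_window g p K hKa hKb
  set u : ℤ → ZMod 2 := fun m => if p.2 ≤ (g m).2 then 1 else 0 with hu
  have hpt : ∀ m : ℤ, epar g p m = u (m+1) - u m := by
    intro m
    have := keyTop p.1 p.2 Y (g m).1 (g m).2 (g (m+1)).1 (g (m+1)).2
      (hgadj m) hp2 hp1 (hb m) (hb (m+1))
    simpa [epar, CrossE, hu] using this
  have hsum : chi g p = u (K : ℤ) - u (-(K : ℤ)) := by
    rw [hw, ← tele u K]
    exact Finset.sum_congr rfl fun m _ => hpt m
  have huK : u (K : ℤ) = 1 := by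
    have := hKa (K : ℤ) le_rfl
    simp only [hu]; rw [if_pos]; omega
  have huK' : u (-(K : ℤ)) = 0 := by
    have := hKb (-(K : ℤ)) le_rfl
    simp only [hu]; rw [if_neg]; omega
  rw [huK, huK'] at hsum
  simpa using hsum

/-- In every coloring of the infinite Hex board, at most one player fulfills the
standard winning condition. -/
theorem infinite_hex_at_most_one_winner (c : ℤ × ℤ → Option Bool) :
    ¬ (RedWinsStd c ∧ BlueWinsStd c) := by
  rintro ⟨⟨f, hf, hfc⟩, ⟨g, hg, hgc⟩⟩
  -- blue chain adjacency in arithmetic form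
  have hgadj : ∀ m : ℤ, AdjA (g m).1 (g m).2 (g (m+1)).1 (g (m+1)).2 := fun m =>
    (hexAdj_iff _ _).1 (hg m).1
  -- red cells are never blue cells
  have hnb : ∀ (k m : ℤ), ¬((g m).1 = (f k).1 ∧ (g m).2 = (f k).2) := by
    intro k m hm
    have hfg : g m = f k := Prod.ext hm.1 hm.2
    have h1 := (hg m).2
    rw [hfg, (hf k).2] at h1
    simp at h1
  -- the parity is constant along the red chain
  have hconst : ∀ i j : ℤ, i ≤ j → chi g (f i) = chi g (f j) := by
    intro i j hij
    refine Int.le_induction (motive := fun j _ => chi g (f i) = chi g (f j)) rfl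
      (fun j _ ih => ih.trans ?_) j hij
    exact chi_adj g hgc hgadj (f j) (f (j+1)) (hnb j) (hnb (j+1))
      ((hexAdj_iff _ _).1 (hf j).1)
  -- bounds on the blue chain
  obtain ⟨N₀, hN₀⟩ := hgc 0 0
  set T : Finset ℤ := Finset.Icc (-(N₀ : ℤ)) (N₀ : ℤ) with hT
  have hTne : T.Nonempty := ⟨0, by simp [hT]⟩
  set Ytop : ℤ := max 1 (T.sup' hTne (fun m => (g m).2) + 1) with hYtop
  set Ybot : ℤ := min (-1) (T.inf' hTne (fun m => (g m).2) - 1) with hYbot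
  have hbtop : ∀ m : ℤ, Ytop ≤ (g m).2 → (g m).1 < 0 := by
    intro m hm
    by_cases hmem : m ∈ T
    · exfalso
      have := Finset.le_sup' (fun m => (g m).2) hmem
      omega
    · simp only [hT, Finset.mem_Icc] at hmem
      rcases (by omega : (N₀ : ℤ) < m ∨ m < -(N₀ : ℤ)) with h | h
      · have hme : m = ((m.toNat : ℕ) : ℤ) := by omega
        rw [hme]
        exact (hN₀ m.toNat (by omega)).1
      · exfalso
        have hme : m = -(((-m).toNat : ℕ) : ℤ) := by omega
        have := (hN₀ (-m).toNat (by omega)).2.2.2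
        rw [← hme] at this
        omega
  have hbbot : ∀ m : ℤ, (g m).2 ≤ Ybot → 0 < (g m).1 := by
    intro m hm
    by_cases hmem : m ∈ T
    · exfalso
      have := Finset.inf'_le (fun m => (g m).2) hmem
      omega
    · simp only [hT, Finset.mem_Icc] at hmem
      rcases (by omega : (N₀ : ℤ) < m ∨ m < -(N₀ : ℤ)) with h | h
      · exfalso
        have hme : m = ((m.toNat : ℕ) : ℤ) := by omega
        have := (hN₀ m.toNat (by omega)).2.1
        rw [← hme] at this
        omega
      · have hme : m = -(((-m).toNat : ℕ) : ℤ) := by omega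
        rw [hme]
        exact (hN₀ (-m).toNat (by omega)).2.2.1
  -- pick red cells far to the south-west and north-east
  obtain ⟨Na, hNa⟩ := hfc 0 Ytop
  obtain ⟨Nb, hNb⟩ := hfc 0 Ybot
  set n₀ : ℕ := max Na Nb with hn₀
  have hSW := hNb n₀ (by omega)
  have hNE := hNa n₀ (by omega)
  have h0 : chi g (f (-(n₀ : ℤ))) = 0 :=
    chi_bot g _ Ybot hbbot (by omega) (by omega)
  have h1 : chi g (f (n₀ : ℤ)) = 1 :=
    chi_top g hgc hgadj _ Ytop hbtop (by omega) (by omega)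
  have := hconst (-(n₀ : ℤ)) (n₀ : ℤ) (by omega)
  rw [h0, h1] at this
  exact absurd this (by decide)
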